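/- Let W be a standard one-dimensional Brownian motion on [0,T], and τ: [0,T] → [0,T] a continuous non-decreasing time change with τ(t) > t for all t ∈ [0,T) and τ(T) = T. For a partition P of [0,T], define μ_P([0,t]) = Σ_{[u,v]∈P, u≤t} (W(v)−W(u))·(W(τ(v))−W(τ(u))). Then for every t ∈ [0,T], E[μ_P([0,t])²] → 0 as the mesh |P| → 0. -/

import Mathlib

open MeasureTheory ProbabilityTheory
open scoped ENNReal BigOperators

/-- A standard one-dimensional Brownian motion: measurable marginals, Gaussian increments
`W(t) − W(s) ∼ N(0, t−s)`, independent increments, and `W(0) = 0` a.s. -/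
def IsBrownianMotion {Ω : Type*} [MeasureSpace Ω] (W : ℝ → Ω → ℝ) : Prop :=
  (∀ t, Measurable (W t)) ∧
  (∀ᵐ ω, W 0 ω = 0) ∧
  (∀ s t : ℝ, 0 ≤ s → s ≤ t →
    Measure.map (fun ω => W t ω - W s ω) ℙ = gaussianReal 0 (t - s).toNNReal) ∧
  (∀ (n : ℕ) (ts : ℕ → ℝ), Monotone ts → (∀ i, 0 ≤ ts i) →
    iIndepFun
      (fun (i : Fin n) ω => W (ts (i + 1)) ω - W (ts i) ω) ℙ)

open Real
open scoped NNReal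

lemma my_pow_div_fact_le_exp {y : ℝ} (hy : 0 ≤ y) (n : ℕ) : y ^ n / n.factorial ≤ Real.exp y := by
  have h := Real.sum_le_exp_of_nonneg hy (n + 1)
  refine le_trans ?_ h
  have : y ^ n / n.factorial = ∑ i ∈ {n}, y ^ i / i.factorial := by simp
  rw [this]
  apply Finset.sum_le_sum_of_subset_of_nonneg
  · simp
  · intro i _ _
    positivity

lemma my_integrable_pow_mul_exp_neg_mul_sq {b : ℝ} (hb : 0 < b) (n : ℕ) :
    Integrable (fun x : ℝ => x ^ n * Real.exp (-b * x ^ 2)) := by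
  have hb2 : 0 < b / 2 := by linarith
  have key : ∀ x : ℝ, ‖x ^ n * Real.exp (-b * x ^ 2)‖ ≤
      (1 + n.factorial * (2 / b) ^ n) * Real.exp (-(b / 2) * x ^ 2) := by
    intro x
    rw [norm_mul, norm_pow, Real.norm_eq_abs, Real.norm_eq_abs,
      abs_of_pos (Real.exp_pos _)]
    have h1 : |x| ^ n ≤ 1 + (x ^ 2) ^ n := by
      rcases le_total (|x|) 1 with h | h
      · have : |x| ^ n ≤ 1 := pow_le_one₀ (abs_nonneg x) h
        have h2 : (0:ℝ) ≤ (x ^ 2) ^ n := by positivity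
        linarith
      · have h2 : |x| ^ n ≤ (|x| ^ 2) ^ n := by
          rw [← pow_mul]
          apply pow_le_pow_right₀ h
          omega
        rw [sq_abs] at h2
        linarith
    have h2 : (x ^ 2) ^ n ≤ n.factorial * (2 / b) ^ n * Real.exp (b / 2 * x ^ 2) := by
      have h3 := my_pow_div_fact_le_exp (y := b / 2 * x ^ 2) (by positivity) n
      rw [mul_pow] at h3
      have h4 : (0:ℝ) < (n.factorial : ℝ) := by positivity
      rw [div_le_iff₀ h4] at h3
      have h5 : (x ^ 2) ^ n = (2 / b) ^ n * ((b / 2) ^ n * (x ^ 2) ^ n) := by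
        rw [← mul_assoc, ← mul_pow]
        field_simp
        simp
      rw [h5]
      calc (2 / b) ^ n * ((b / 2) ^ n * (x ^ 2) ^ n)
          ≤ (2 / b) ^ n * (Real.exp (b / 2 * x ^ 2) * n.factorial) := by
            apply mul_le_mul_of_nonneg_left h3 (by positivity)
        _ = n.factorial * (2 / b) ^ n * Real.exp (b / 2 * x ^ 2) := by ring
    calc |x| ^ n * Real.exp (-b * x ^ 2)
        ≤ (1 + n.factorial * (2 / b) ^ n * Real.exp (b / 2 * x ^ 2)) * Real.exp (-b * x ^ 2) := by
          apply mul_le_mul_of_nonneg_right _ (Real.exp_pos _).le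
          linarith
      _ = Real.exp (-b * x ^ 2) + n.factorial * (2 / b) ^ n *
            (Real.exp (b / 2 * x ^ 2) * Real.exp (-b * x ^ 2)) := by ring
      _ ≤ Real.exp (-(b / 2) * x ^ 2) + n.factorial * (2 / b) ^ n *
            Real.exp (-(b / 2) * x ^ 2) := by
          rw [← Real.exp_add]
          have e1 : Real.exp (-b * x ^ 2) ≤ Real.exp (-(b / 2) * x ^ 2) := by
            apply Real.exp_le_exp.2; nlinarith [sq_nonneg x]
          have e2 : Real.exp (b / 2 * x ^ 2 + -b * x ^ 2) ≤ Real.exp (-(b / 2) * x ^ 2) := by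
            apply Real.exp_le_exp.2; nlinarith [sq_nonneg x]
          have c1 : (0:ℝ) ≤ (n.factorial : ℝ) * (2 / b) ^ n := by positivity
          nlinarith [mul_le_mul_of_nonneg_left e2 c1]
      _ = (1 + n.factorial * (2 / b) ^ n) * Real.exp (-(b / 2) * x ^ 2) := by ring
  refine Integrable.mono' ((integrable_exp_neg_mul_sq hb2).const_mul _) ?_ (ae_of_all _ key)
  exact ((measurable_id.pow_const n).mul
    (((measurable_id.pow_const 2).const_mul (-b)).exp)).aestronglyMeasurable


lemma my_hasDerivAt_pow_exp (b : ℝ) (m : ℕ) (x : ℝ) :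
    HasDerivAt (fun x : ℝ => x ^ (m + 1) * Real.exp (-b * x ^ 2))
      ((m + 1 : ℝ) * x ^ m * Real.exp (-b * x ^ 2)
        - 2 * b * x ^ (m + 2) * Real.exp (-b * x ^ 2)) x := by
  have h1 : HasDerivAt (fun x : ℝ => x ^ (m + 1)) ((m + 1 : ℝ) * x ^ m) x := by
    simpa using hasDerivAt_pow (m + 1) x
  have h2 : HasDerivAt (fun x : ℝ => -b * x ^ 2) (-b * (2 * x)) x := by
    simpa using (hasDerivAt_pow 2 x).const_mul (-b)
  have h3 := h2.exp
  have h4 := h1.mul h3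
  exact h4.congr_deriv (by rw [pow_succ, pow_succ]; ring)

lemma my_gauss_rec {b : ℝ} (hb : 0 < b) (m : ℕ) :
    2 * b * ∫ x : ℝ, x ^ (m + 2) * Real.exp (-b * x ^ 2)
      = (m + 1 : ℝ) * ∫ x : ℝ, x ^ m * Real.exp (-b * x ^ 2) := by
  have i1 := my_integrable_pow_mul_exp_neg_mul_sq hb m
  have i2 := my_integrable_pow_mul_exp_neg_mul_sq hb (m + 2)
  have i3 := my_integrable_pow_mul_exp_neg_mul_sq hb (m + 1)
  have int1 : Integrable (fun x : ℝ => (m + 1 : ℝ) * x ^ m * Real.exp (-b * x ^ 2)) := by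
    simpa [mul_assoc] using i1.const_mul (m + 1 : ℝ)
  have int2 : Integrable (fun x : ℝ => 2 * b * x ^ (m + 2) * Real.exp (-b * x ^ 2)) := by
    simpa [mul_assoc] using i2.const_mul (2 * b)
  have h0 := integral_eq_zero_of_hasDerivAt_of_integrable
    (fun x => my_hasDerivAt_pow_exp b m x) (int1.sub int2) i3
  rw [integral_sub int1 int2] at h0
  have e1 : ∫ x : ℝ, (m + 1 : ℝ) * x ^ m * Real.exp (-b * x ^ 2)
      = (m + 1 : ℝ) * ∫ x : ℝ, x ^ m * Real.exp (-b * x ^ 2) := by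
    simp_rw [mul_assoc, integral_const_mul]
  have e2 : ∫ x : ℝ, 2 * b * x ^ (m + 2) * Real.exp (-b * x ^ 2)
      = 2 * b * ∫ x : ℝ, x ^ (m + 2) * Real.exp (-b * x ^ 2) := by
    simp_rw [mul_assoc, integral_const_mul]
  rw [e1, e2] at h0
  linarith

lemma my_I0 {b : ℝ} (hb : 0 < b) :
    ∫ x : ℝ, x ^ 0 * Real.exp (-b * x ^ 2) = Real.sqrt (π / b) := by
  simpa using integral_gaussian b

lemma my_I1 {b : ℝ} (hb : 0 < b) : ∫ x : ℝ, x ^ 1 * Real.exp (-b * x ^ 2) = 0 := by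
  have i1 := my_integrable_pow_mul_exp_neg_mul_sq hb 1
  have i0 := my_integrable_pow_mul_exp_neg_mul_sq hb 0
  have hd : ∀ x : ℝ, HasDerivAt (fun x : ℝ => Real.exp (-b * x ^ 2))
      (-2 * b * x ^ 1 * Real.exp (-b * x ^ 2)) x := by
    intro x
    have h2 : HasDerivAt (fun x : ℝ => -b * x ^ 2) (-b * (2 * x)) x := by
      simpa using (hasDerivAt_pow 2 x).const_mul (-b)
    have h3 := h2.exp
    convert h3 using 1
    ring
  have int1 : Integrable (fun x : ℝ => -2 * b * x ^ 1 * Real.exp (-b * x ^ 2)) := by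
    simpa [mul_assoc] using i1.const_mul (-2 * b)
  have i0' : Integrable (fun x : ℝ => Real.exp (-b * x ^ 2)) := by simpa using i0
  have h0 := integral_eq_zero_of_hasDerivAt_of_integrable hd int1 i0'
  have e1 : ∫ x : ℝ, -2 * b * x ^ 1 * Real.exp (-b * x ^ 2)
      = -2 * b * ∫ x : ℝ, x ^ 1 * Real.exp (-b * x ^ 2) := by
    simp_rw [mul_assoc, integral_const_mul]
  rw [e1] at h0
  have hb' : (-2 : ℝ) * b ≠ 0 := by nlinarith
  exact (mul_eq_zero.1 h0).resolve_left hb'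

lemma my_I2 {b : ℝ} (hb : 0 < b) :
    ∫ x : ℝ, x ^ 2 * Real.exp (-b * x ^ 2) = Real.sqrt (π / b) / (2 * b) := by
  have h := my_gauss_rec hb 0
  rw [my_I0 hb] at h
  have hb' : (2 : ℝ) * b ≠ 0 := by positivity
  field_simp at h ⊢
  linarith

lemma my_I4 {b : ℝ} (hb : 0 < b) :
    ∫ x : ℝ, x ^ 4 * Real.exp (-b * x ^ 2) = 3 * Real.sqrt (π / b) / (4 * b ^ 2) := by
  have h := my_gauss_rec hb 2
  rw [my_I2 hb] at h
  have hb' : (2 : ℝ) * b ≠ 0 := by positivity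
  field_simp at h ⊢
  nlinarith [h]


section GaussMoments

variable {v : ℝ≥0}

lemma my_pdf_eq (hv : v ≠ 0) (x : ℝ) :
    gaussianPDFReal 0 v x
      = (Real.sqrt (2 * π * v))⁻¹ * Real.exp (-(((2:ℝ) * v)⁻¹) * x ^ 2) := by
  have hv' : (0:ℝ) < v := by exact_mod_cast (lt_of_le_of_ne (zero_le (a := v)) (Ne.symm hv))
  rw [gaussianPDFReal]
  congr 2
  rw [sub_zero]
  field_simp

lemma my_transfer (hv : v ≠ 0) (g : ℝ → ℝ) :
    ∫ x, g x ∂(gaussianReal 0 v) = ∫ x, gaussianPDFReal 0 v x * g x := by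
  rw [gaussianReal_of_var_ne_zero 0 hv]
  have h1 : gaussianPDF 0 v
      = fun x => ((Real.toNNReal (gaussianPDFReal 0 v x) : ℝ≥0) : ℝ≥0∞) := rfl
  rw [h1, integral_withDensity_eq_integral_smul
    ((measurable_gaussianPDFReal 0 v).real_toNNReal) g]
  congr 1
  ext x
  rw [NNReal.smul_def, Real.coe_toNNReal _ (gaussianPDFReal_nonneg 0 v x), smul_eq_mul]

lemma my_gauss_pow_int (v : ℝ≥0) (k : ℕ) :
    Integrable (fun x : ℝ => x ^ k) (gaussianReal 0 v) := by
  by_cases hv : v = 0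
  · subst hv
    rw [gaussianReal_zero_var]
    exact (integrable_const ((0:ℝ) ^ k)).congr (ae_eq_dirac' (measurable_id.pow_const k)).symm
  · have hv' : (0:ℝ) < v := by exact_mod_cast (lt_of_le_of_ne (zero_le (a := v)) (Ne.symm hv))
    have hb : (0:ℝ) < ((2:ℝ) * v)⁻¹ := by positivity
    rw [gaussianReal_of_var_ne_zero 0 hv]
    rw [integrable_withDensity_iff (measurable_gaussianPDF 0 v)
      (ae_of_all _ fun x => ENNReal.ofReal_lt_top)]
    have he : ∀ x : ℝ, x ^ k * (gaussianPDF 0 v x).toReal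
        = (Real.sqrt (2 * π * v))⁻¹ * (x ^ k * Real.exp (-(((2:ℝ) * v)⁻¹) * x ^ 2)) := by
      intro x
      rw [gaussianPDF, ENNReal.toReal_ofReal (gaussianPDFReal_nonneg 0 v x), my_pdf_eq hv]
      ring
    simp_rw [he]
    exact (my_integrable_pow_mul_exp_neg_mul_sq hb k).const_mul _

lemma my_gauss_moment_aux (hv : v ≠ 0) (k : ℕ) :
    ∫ x, x ^ k ∂(gaussianReal 0 v)
      = (Real.sqrt (2 * π * v))⁻¹ * ∫ x : ℝ, x ^ k * Real.exp (-(((2:ℝ) * v)⁻¹) * x ^ 2) := by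
  rw [my_transfer hv]
  simp_rw [my_pdf_eq hv, mul_assoc, integral_const_mul]
  congr 1
  apply integral_congr_ae
  filter_upwards with x
  ring

lemma my_sqrt_ne (hv : v ≠ 0) : Real.sqrt (2 * π * v) ≠ 0 ∧
    Real.sqrt (π / ((2:ℝ) * v)⁻¹) = Real.sqrt (2 * π * v) := by
  have hv' : (0:ℝ) < v := by exact_mod_cast (lt_of_le_of_ne (zero_le (a := v)) (Ne.symm hv))
  constructor
  · have : (0:ℝ) < 2 * π * v := by positivity
    positivity
  · congr 1
    field_simp

lemma my_gauss_mean (v : ℝ≥0) : ∫ x, x ^ 1 ∂(gaussianReal 0 v) = 0 := by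
  by_cases hv : v = 0
  · subst hv; rw [gaussianReal_zero_var, integral_dirac]; norm_num
  · have hv' : (0:ℝ) < v := by exact_mod_cast (lt_of_le_of_ne (zero_le (a := v)) (Ne.symm hv))
    have hb : (0:ℝ) < ((2:ℝ) * v)⁻¹ := by positivity
    rw [my_gauss_moment_aux hv, my_I1 hb, mul_zero]

lemma my_gauss_var (v : ℝ≥0) : ∫ x, x ^ 2 ∂(gaussianReal 0 v) = v := by
  by_cases hv : v = 0
  · subst hv; rw [gaussianReal_zero_var, integral_dirac]; norm_num
  · have hv' : (0:ℝ) < v := by exact_mod_cast (lt_of_le_of_ne (zero_le (a := v)) (Ne.symm hv))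
    have hb : (0:ℝ) < ((2:ℝ) * v)⁻¹ := by positivity
    rw [my_gauss_moment_aux hv, my_I2 hb, (my_sqrt_ne hv).2]
    rw [div_eq_mul_inv, ← mul_assoc]
    rw [inv_mul_cancel₀ (my_sqrt_ne hv).1]
    field_simp

lemma my_gauss_four (v : ℝ≥0) : ∫ x, x ^ 4 ∂(gaussianReal 0 v) = 3 * (v:ℝ) ^ 2 := by
  by_cases hv : v = 0
  · subst hv; rw [gaussianReal_zero_var, integral_dirac]; norm_num
  · have hv' : (0:ℝ) < v := by exact_mod_cast (lt_of_le_of_ne (zero_le (a := v)) (Ne.symm hv))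
    have hb : (0:ℝ) < ((2:ℝ) * v)⁻¹ := by positivity
    rw [my_gauss_moment_aux hv, my_I4 hb, (my_sqrt_ne hv).2]
    have h9 : (3:ℝ) * Real.sqrt (2*π*v) / (4 * (((2:ℝ)*v)⁻¹) ^ 2)
        = Real.sqrt (2*π*v) * (3 * v ^ 2) := by
      field_simp
      ring
    rw [h9, ← mul_assoc, inv_mul_cancel₀ (my_sqrt_ne hv).1, one_mul]

end GaussMoments


section Incr
variable {Ω : Type*} [MeasureSpace Ω] [IsProbabilityMeasure (ℙ : Measure Ω)] {W : ℝ → Ω → ℝ}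

lemma my_incr_meas (hW : IsBrownianMotion W) (u v : ℝ) :
    Measurable (fun ω => W v ω - W u ω) := (hW.1 v).sub (hW.1 u)

lemma my_incr_pow_int (hW : IsBrownianMotion W) {u v : ℝ} (h0 : 0 ≤ u) (huv : u ≤ v) (k : ℕ) :
    Integrable (fun ω => (W v ω - W u ω) ^ k) ℙ := by
  have h := my_gauss_pow_int ((v - u).toNNReal) k
  rw [← hW.2.2.1 u v h0 huv] at h
  exact (integrable_map_measure (measurable_id.pow_const k).aestronglyMeasurable
    (my_incr_meas hW u v).aemeasurable).mp h

lemma my_incr_moment (hW : IsBrownianMotion W) {u v : ℝ} (h0 : 0 ≤ u) (huv : u ≤ v) (k : ℕ) :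
    ∫ ω, (W v ω - W u ω) ^ k ∂ℙ = ∫ x, x ^ k ∂(gaussianReal 0 (v - u).toNNReal) := by
  rw [← hW.2.2.1 u v h0 huv]
  exact (integral_map (my_incr_meas hW u v).aemeasurable
    ((measurable_id.pow_const k).aestronglyMeasurable)).symm

lemma my_incr_mean (hW : IsBrownianMotion W) {u v : ℝ} (h0 : 0 ≤ u) (huv : u ≤ v) :
    ∫ ω, (W v ω - W u ω) ∂ℙ = 0 := by
  have h := my_incr_moment hW h0 huv 1
  rw [my_gauss_mean] at h
  simpa using h

lemma my_incr_sq (hW : IsBrownianMotion W) {u v : ℝ} (h0 : 0 ≤ u) (huv : u ≤ v) :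
    ∫ ω, (W v ω - W u ω) ^ 2 ∂ℙ = v - u := by
  rw [my_incr_moment hW h0 huv 2, my_gauss_var, Real.coe_toNNReal _ (sub_nonneg.2 huv)]

lemma my_incr_four (hW : IsBrownianMotion W) {u v : ℝ} (h0 : 0 ≤ u) (huv : u ≤ v) :
    ∫ ω, (W v ω - W u ω) ^ 4 ∂ℙ = 3 * (v - u) ^ 2 := by
  rw [my_incr_moment hW h0 huv 4, my_gauss_four, Real.coe_toNNReal _ (sub_nonneg.2 huv)]

end Incr

section Prod
variable {Ω : Type*} [MeasureSpace Ω] [IsProbabilityMeasure (ℙ : Measure Ω)]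

lemma my_int_mul4 {f g h k : Ω → ℝ} (hf : Measurable f) (hg : Measurable g)
    (hh : Measurable h) (hk : Measurable k)
    (if4 : Integrable (fun ω => f ω ^ 4) ℙ) (ig4 : Integrable (fun ω => g ω ^ 4) ℙ)
    (ih4 : Integrable (fun ω => h ω ^ 4) ℙ) (ik4 : Integrable (fun ω => k ω ^ 4) ℙ) :
    Integrable (fun ω => f ω * g ω * h ω * k ω) ℙ := by
  refine Integrable.mono'
    (g := fun ω => (f ω ^ 4 + g ω ^ 4 + h ω ^ 4 + k ω ^ 4) / 4)
    ((((if4.add ig4).add ih4).add ik4).div_const 4)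
    (((hf.mul hg).mul hh |>.mul hk).aestronglyMeasurable) (ae_of_all _ fun ω => ?_)
  rw [Real.norm_eq_abs]
  rw [abs_le]
  constructor <;>
    nlinarith [sq_nonneg (f ω * g ω - h ω * k ω), sq_nonneg (f ω * g ω + h ω * k ω),
      sq_nonneg (f ω ^ 2 - g ω ^ 2), sq_nonneg (h ω ^ 2 - k ω ^ 2),
      sq_nonneg (f ω ^ 2 + g ω ^ 2), sq_nonneg (h ω ^ 2 + k ω ^ 2)]

lemma my_int_mul3 {f g h : Ω → ℝ} (hf : Measurable f) (hg : Measurable g)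
    (hh : Measurable h)
    (if4 : Integrable (fun ω => f ω ^ 4) ℙ) (ig4 : Integrable (fun ω => g ω ^ 4) ℙ)
    (ih4 : Integrable (fun ω => h ω ^ 4) ℙ) :
    Integrable (fun ω => f ω * g ω * h ω) ℙ := by
  have := my_int_mul4 (k := fun _ : Ω => (1:ℝ)) hf hg hh measurable_const if4 ig4 ih4
    (by simpa using (integrable_const (1:ℝ) : Integrable _ (ℙ : Measure Ω)))
  simpa using this

lemma my_cs {φ ψ : Ω → ℝ} (hφm : AEStronglyMeasurable φ ℙ) (hψm : AEStronglyMeasurable ψ ℙ)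
    (hφ : Integrable (fun ω => φ ω ^ 2) ℙ) (hψ : Integrable (fun ω => ψ ω ^ 2) ℙ) :
    ∫ ω, |φ ω * ψ ω| ∂ℙ ≤ Real.sqrt ((∫ ω, φ ω ^ 2 ∂ℙ) * (∫ ω, ψ ω ^ 2 ∂ℙ)) := by
  have hconj : Real.HolderConjugate 2 2 := Real.HolderConjugate.two_two
  have hφa : AEStronglyMeasurable (fun ω => |φ ω|) ℙ := by
    simpa [Real.norm_eq_abs] using hφm.norm
  have hψa : AEStronglyMeasurable (fun ω => |ψ ω|) ℙ := by
    simpa [Real.norm_eq_abs] using hψm.norm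
  have hφ2 : MemLp (fun ω => |φ ω|) (ENNReal.ofReal 2) ℙ := by
    rw [show ENNReal.ofReal 2 = 2 by norm_num]
    rw [memLp_two_iff_integrable_sq hφa]
    simpa [sq_abs] using hφ
  have hψ2 : MemLp (fun ω => |ψ ω|) (ENNReal.ofReal 2) ℙ := by
    rw [show ENNReal.ofReal 2 = 2 by norm_num]
    rw [memLp_two_iff_integrable_sq hψa]
    simpa [sq_abs] using hψ
  have h := integral_mul_le_Lp_mul_Lq_of_nonneg hconj
    (ae_of_all _ fun ω => abs_nonneg (φ ω)) (ae_of_all _ fun ω => abs_nonneg (ψ ω)) hφ2 hψ2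
  simp_rw [← abs_mul] at h
  have e2 : ∀ y : ℝ, |y| ^ (2:ℝ) = y ^ 2 := fun y => by
    rw [show (2:ℝ) = ((2:ℕ):ℝ) by norm_num, Real.rpow_natCast, sq_abs]
  simp_rw [e2] at h
  have hnn1 : (0:ℝ) ≤ ∫ ω, φ ω ^ 2 ∂ℙ := integral_nonneg fun ω => sq_nonneg _
  have hnn2 : (0:ℝ) ≤ ∫ ω, ψ ω ^ 2 ∂ℙ := integral_nonneg fun ω => sq_nonneg _
  rw [Real.sqrt_mul hnn1, Real.sqrt_eq_rpow, Real.sqrt_eq_rpow]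
  convert h using 2 <;> norm_num
end Prod


section Indep
variable {Ω : Type*} [MeasureSpace Ω] [IsProbabilityMeasure (ℙ : Measure Ω)] {W : ℝ → Ω → ℝ}

lemma my_indep (hW : IsBrownianMotion W) (k : ℕ) (p q : Fin k → ℝ) {c d : ℝ}
    (hc : 0 ≤ c) (hcd : c ≤ d)
    (hp : ∀ x, p x ∈ Set.Icc 0 c) (hq : ∀ x, q x ∈ Set.Icc 0 c) :
    IndepFun (fun ω => fun x : Fin k => W (q x) ω - W (p x) ω)
      (fun ω => W d ω - W c ω) ℙ := by
  classical
  set nn := k + k + 1 with hnn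
  set w : Fin nn → ℝ := Fin.cons 0 (Fin.append p q) with hw
  set σ := Tuple.sort w with hσ
  have hwmem : ∀ i, w i ∈ Set.Icc (0:ℝ) c := by
    intro i
    refine Fin.cases ?_ ?_ i
    · simp only [hw, Fin.cons_zero]
      exact ⟨le_refl _, hc⟩
    · intro j
      simp only [hw, Fin.cons_succ]
      refine Fin.addCases (fun x => ?_) (fun x => ?_) j
      · rw [Fin.append_left]; exact hp x
      · rw [Fin.append_right]; exact hq x
  set ts : ℕ → ℝ := fun j => if h : j < nn then w (σ ⟨j, h⟩) else if j = nn then c else d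
    with hts
  have hts_lt : ∀ (j : ℕ) (h : j < nn), ts j = w (σ ⟨j, h⟩) := fun j h => dif_pos h
  have hts_nn : ts nn = c := by simp [hts]
  have hts_top : ∀ j, nn < j → ts j = d := by
    intro j hj
    simp only [hts]
    rw [dif_neg (by omega), if_neg (by omega)]
  have hsorted : Monotone (w ∘ σ) := Tuple.monotone_sort w
  have hts_mono : Monotone ts := by
    apply monotone_nat_of_le_succ
    intro j
    by_cases h1 : j + 1 < nn
    · rw [hts_lt j (by omega), hts_lt (j + 1) h1]
      exact hsorted (by simp [Fin.le_def])
    · by_cases h2 : j + 1 = nn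
      · have e : ts (j + 1) = c := by rw [h2]; exact hts_nn
        rw [e, hts_lt j (by omega)]
        exact (hwmem _).2
      · have e : ts (j + 1) = d := hts_top _ (by omega)
        rw [e]
        by_cases hj : j < nn
        · rw [hts_lt j hj]; exact le_trans (hwmem _).2 hcd
        · by_cases hj2 : j = nn
          · have e2 : ts j = c := by rw [hj2]; exact hts_nn
            rw [e2]; exact hcd
          · rw [hts_top j (by omega)]
  have hts_nonneg : ∀ j, 0 ≤ ts j := by
    intro j
    by_cases hj : j < nn
    · rw [hts_lt j hj]; exact (hwmem _).1
    · by_cases hj2 : j = nn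
      · have e2 : ts j = c := by rw [hj2]; exact hts_nn
        rw [e2]; exact hc
      · rw [hts_top j (by omega)]; exact le_trans hc hcd
  have hInd := hW.2.2.2 (nn + 1) ts hts_mono hts_nonneg
  set G : ℕ → Ω → ℝ := fun j ω => W (ts (j + 1)) ω - W (ts j) ω with hG
  set F : Fin (nn + 1) → Ω → ℝ := fun i ω => W (ts (↑i + 1)) ω - W (ts ↑i) ω with hF
  have hFmeas : ∀ i, Measurable (F i) := fun i => (hW.1 _).sub (hW.1 _)
  set S : Finset (Fin (nn + 1)) := Finset.Iio (Fin.last nn) with hS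
  set T : Finset (Fin (nn + 1)) := {Fin.last nn} with hT
  have hdisj : Disjoint S T := by
    rw [Finset.disjoint_right]
    intro i hi hiS
    rw [hT, Finset.mem_singleton] at hi
    rw [hS, Finset.mem_Iio, hi] at hiS
    exact lt_irrefl _ hiS
  have hIF := hInd.indepFun_finset S T hdisj hFmeas
  -- telescoping key
  have key : ∀ (j : ℕ), j ≤ nn → ∀ ω,
      (∑ i : {i // i ∈ S}, if ((i : Fin (nn+1)) : ℕ) < j then F i ω else 0)
        = W (ts j) ω - W (ts 0) ω := by
    intro j hj ω
    have e1 : (∑ i : {i // i ∈ S}, if ((i : Fin (nn+1)) : ℕ) < j then F i ω else 0)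
        = ∑ i ∈ S, (if (i : ℕ) < j then F i ω else 0) := by
      rw [← Finset.sum_attach S (fun i => if (i : ℕ) < j then F i ω else 0)]
      rfl
    have e2 : (∑ i ∈ S, (if (i : ℕ) < j then F i ω else 0))
        = ∑ i : Fin (nn + 1), (if (i : ℕ) < j then F i ω else 0) := by
      apply Finset.sum_subset (Finset.subset_univ S)
      intro i _ hiS
      have : i = Fin.last nn := by
        by_contra hne
        exact hiS (by rw [hS, Finset.mem_Iio]; exact lt_of_le_of_ne (Fin.le_last i) hne)
      rw [if_neg]
      rw [this]
      simp only [Fin.val_last]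
      omega
    rw [e1, e2, Fin.sum_univ_eq_sum_range (fun i => if i < j then G i ω else 0) (nn + 1)]
    rw [← Finset.sum_filter]
    have e3 : (Finset.range (nn + 1)).filter (· < j) = Finset.range j := by
      ext a
      simp only [Finset.mem_filter, Finset.mem_range]
      omega
    rw [e3, hG]
    simpa using Finset.sum_range_sub (fun i => W (ts i) ω) j
  -- index positions
  set ip : Fin k → ℕ := fun x => ((σ.symm (Fin.succ (Fin.castAdd k x))) : ℕ) with hip
  set iq : Fin k → ℕ := fun x => ((σ.symm (Fin.succ (Fin.natAdd k x))) : ℕ) with hiq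
  have hts_ip : ∀ x, ts (ip x) = p x := by
    intro x
    rw [hts_lt (ip x) (by exact (σ.symm _).isLt)]
    have : (⟨ip x, (σ.symm _).isLt⟩ : Fin nn) = σ.symm (Fin.succ (Fin.castAdd k x)) := by
      apply Fin.ext; rfl
    rw [this, Equiv.apply_symm_apply]
    simp only [hw, Fin.cons_succ]
    rw [Fin.append_left]
  have hts_iq : ∀ x, ts (iq x) = q x := by
    intro x
    rw [hts_lt (iq x) (by exact (σ.symm _).isLt)]
    have : (⟨iq x, (σ.symm _).isLt⟩ : Fin nn) = σ.symm (Fin.succ (Fin.natAdd k x)) := by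
      apply Fin.ext; rfl
    rw [this, Equiv.apply_symm_apply]
    simp only [hw, Fin.cons_succ]
    rw [Fin.append_right]
  set Φ : ({i // i ∈ S} → ℝ) → (Fin k → ℝ) := fun v x =>
    (∑ i : {i // i ∈ S}, if ((i : Fin (nn+1)) : ℕ) < iq x then v i else 0)
      - (∑ i : {i // i ∈ S}, if ((i : Fin (nn+1)) : ℕ) < ip x then v i else 0) with hΦ
  have hterm : ∀ (N : ℕ), Measurable (fun v : {i // i ∈ S} → ℝ =>
      ∑ i : {i // i ∈ S}, if ((i : Fin (nn+1)) : ℕ) < N then v i else 0) := by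
    intro N
    apply Finset.measurable_sum
    intro i _
    by_cases hcond : ((i : Fin (nn+1)) : ℕ) < N
    · simp only [if_pos hcond]
      exact measurable_pi_apply i
    · simp only [if_neg hcond]
      exact measurable_const
  have hΦmeas : Measurable Φ := by
    apply measurable_pi_lambda
    intro x
    exact (hterm (iq x)).sub (hterm (ip x))
  have hψmeas : Measurable (fun v : {i // i ∈ T} → ℝ =>
      v ⟨Fin.last nn, by rw [hT]; exact Finset.mem_singleton_self _⟩) :=
    measurable_pi_apply _
  have hcomp := hIF.comp hΦmeas hψmeas
  have hL : (Φ ∘ fun a (i : {i // i ∈ S}) => F i a)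
      = (fun ω => fun x : Fin k => W (q x) ω - W (p x) ω) := by
    funext ω
    funext x
    simp only [Function.comp_apply, hΦ]
    rw [key (iq x) (Nat.le_of_lt (σ.symm _).isLt) ω,
      key (ip x) (Nat.le_of_lt (σ.symm _).isLt) ω, hts_ip x, hts_iq x]
    ring
  have hR : ((fun v : {i // i ∈ T} → ℝ =>
        v ⟨Fin.last nn, by rw [hT]; exact Finset.mem_singleton_self _⟩)
        ∘ fun a (i : {i // i ∈ T}) => F i a)
      = fun ω => W d ω - W c ω := by
    funext ω
    simp only [Function.comp_apply, hF, Fin.val_last]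
    rw [hts_nn, hts_top (nn + 1) (by omega)]
  rw [hL, hR] at hcomp
  exact hcomp
end Indep


section Helpers2
variable {Ω : Type*} [MeasureSpace Ω] [IsProbabilityMeasure (ℙ : Measure Ω)] {W : ℝ → Ω → ℝ}

lemma my_indep_prod3 (hW : IsBrownianMotion W) {a1 b1 a2 b2 a3 b3 c d : ℝ}
    (hc : 0 ≤ c) (hcd : c ≤ d)
    (h1 : a1 ∈ Set.Icc 0 c) (h1' : b1 ∈ Set.Icc 0 c)
    (h2 : a2 ∈ Set.Icc 0 c) (h2' : b2 ∈ Set.Icc 0 c)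
    (h3 : a3 ∈ Set.Icc 0 c) (h3' : b3 ∈ Set.Icc 0 c) :
    IndepFun (fun ω => (W b1 ω - W a1 ω) * (W b2 ω - W a2 ω) * (W b3 ω - W a3 ω))
      (fun ω => W d ω - W c ω) ℙ := by
  have h := my_indep hW 3 ![a1, a2, a3] ![b1, b2, b3] hc hcd
    (by intro x; fin_cases x <;> assumption)
    (by intro x; fin_cases x <;> assumption)
  have hΦ : Measurable (fun v : Fin 3 → ℝ => v 0 * v 1 * v 2) :=
    ((measurable_pi_apply 0).mul (measurable_pi_apply 1)).mul (measurable_pi_apply 2)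
  have h2 := h.comp hΦ measurable_id
  convert h2 using 1 <;> rfl

lemma my_abs_int_mul4 {f g h k : Ω → ℝ} (hf : Measurable f) (hg : Measurable g)
    (hh : Measurable h) (hk : Measurable k)
    (if4 : Integrable (fun ω => f ω ^ 4) ℙ) (ig4 : Integrable (fun ω => g ω ^ 4) ℙ)
    (ih4 : Integrable (fun ω => h ω ^ 4) ℙ) (ik4 : Integrable (fun ω => k ω ^ 4) ℙ) :
    |∫ ω, f ω * g ω * h ω * k ω ∂ℙ| ≤
      Real.sqrt (Real.sqrt ((∫ ω, f ω ^ 4 ∂ℙ) * (∫ ω, g ω ^ 4 ∂ℙ))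
        * Real.sqrt ((∫ ω, h ω ^ 4 ∂ℙ) * (∫ ω, k ω ^ 4 ∂ℙ))) := by
  have step1 : |∫ ω, f ω * g ω * h ω * k ω ∂ℙ| ≤ ∫ ω, |f ω * g ω * h ω * k ω| ∂ℙ := by
    simpa only [Real.norm_eq_abs] using
      norm_integral_le_integral_norm (μ := (ℙ : Measure Ω)) (fun ω => f ω * g ω * h ω * k ω)
  have ifg : Integrable (fun ω => (f ω * g ω) ^ 2) ℙ :=
    (my_int_mul4 hf hf hg hg if4 if4 ig4 ig4).congr (ae_of_all _ fun ω => by ring)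
  have ihk : Integrable (fun ω => (h ω * k ω) ^ 2) ℙ :=
    (my_int_mul4 hh hh hk hk ih4 ih4 ik4 ik4).congr (ae_of_all _ fun ω => by ring)
  have step2 : ∫ ω, |f ω * g ω * h ω * k ω| ∂ℙ
      ≤ Real.sqrt ((∫ ω, (f ω * g ω) ^ 2 ∂ℙ) * (∫ ω, (h ω * k ω) ^ 2 ∂ℙ)) := by
    have := my_cs (φ := fun ω => f ω * g ω) (ψ := fun ω => h ω * k ω)
      (hf.mul hg).aestronglyMeasurable (hh.mul hk).aestronglyMeasurable ifg ihk
    refine le_trans (le_of_eq ?_) this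
    apply integral_congr_ae
    filter_upwards with ω
    congr 1
    ring
  have hfg4 : ∫ ω, (f ω * g ω) ^ 2 ∂ℙ ≤ Real.sqrt ((∫ ω, f ω ^ 4 ∂ℙ) * (∫ ω, g ω ^ 4 ∂ℙ)) := by
    have hcs := my_cs (φ := fun ω => f ω ^ 2) (ψ := fun ω => g ω ^ 2)
      ((hf.pow_const 2).aestronglyMeasurable) ((hg.pow_const 2).aestronglyMeasurable)
      (if4.congr (ae_of_all _ fun ω => by ring)) (ig4.congr (ae_of_all _ fun ω => by ring))
    refine le_trans (le_of_eq ?_) (le_trans hcs (le_of_eq ?_))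
    · apply integral_congr_ae
      filter_upwards with ω
      rw [← abs_of_nonneg (a := (f ω * g ω) ^ 2) (by positivity)]
      congr 1
      ring
    · congr 2 <;> · apply integral_congr_ae; filter_upwards with ω; ring
  have hhk4 : ∫ ω, (h ω * k ω) ^ 2 ∂ℙ ≤ Real.sqrt ((∫ ω, h ω ^ 4 ∂ℙ) * (∫ ω, k ω ^ 4 ∂ℙ)) := by
    have hcs := my_cs (φ := fun ω => h ω ^ 2) (ψ := fun ω => k ω ^ 2)
      ((hh.pow_const 2).aestronglyMeasurable) ((hk.pow_const 2).aestronglyMeasurable)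
      (ih4.congr (ae_of_all _ fun ω => by ring)) (ik4.congr (ae_of_all _ fun ω => by ring))
    refine le_trans (le_of_eq ?_) (le_trans hcs (le_of_eq ?_))
    · apply integral_congr_ae
      filter_upwards with ω
      rw [← abs_of_nonneg (a := (h ω * k ω) ^ 2) (by positivity)]
      congr 1
      ring
    · congr 2 <;> · apply integral_congr_ae; filter_upwards with ω; ring
  refine le_trans step1 (le_trans step2 ?_)
  apply Real.sqrt_le_sqrt
  have nn1 : (0:ℝ) ≤ ∫ ω, (f ω * g ω) ^ 2 ∂ℙ := integral_nonneg fun ω => sq_nonneg _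
  have nn2 : (0:ℝ) ≤ ∫ ω, (h ω * k ω) ^ 2 ∂ℙ := integral_nonneg fun ω => sq_nonneg _
  exact mul_le_mul hfg4 hhk4 nn2 (Real.sqrt_nonneg _)

end Helpers2

lemma my_fin_telescope (n : ℕ) (f : Fin (n + 1) → ℝ) :
    ∑ i : Fin n, (f i.succ - f i.castSucc) = f (Fin.last n) - f 0 := by
  set u : ℕ → ℝ := fun k => f ⟨min k n, by omega⟩ with hu
  have h1 : ∀ i : Fin n, f i.succ = u ((i : ℕ) + 1) := by
    intro i
    congr 1
    apply Fin.ext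
    simp only [Fin.val_succ]
    omega
  have h2 : ∀ i : Fin n, f i.castSucc = u (i : ℕ) := by
    intro i
    congr 1
    apply Fin.ext
    simp only [Fin.coe_castSucc]
    omega
  have e : ∑ i : Fin n, (f i.succ - f i.castSucc)
      = ∑ k ∈ Finset.range n, (u (k + 1) - u k) := by
    rw [← Fin.sum_univ_eq_sum_range]
    apply Finset.sum_congr rfl
    intro i _
    rw [h1 i, h2 i]
  rw [e, Finset.sum_range_sub u n]
  have e1 : u n = f (Fin.last n) := by
    simp only [hu]
    congr 1
    apply Fin.ext
    simp [Fin.val_last]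
  have e2 : u 0 = f 0 := by
    simp only [hu]
    congr 1
  rw [e1, e2]


set_option maxHeartbeats 1000000 in
lemma my_main_bound {Ω : Type*} [MeasureSpace Ω] [IsProbabilityMeasure (ℙ : Measure Ω)]
    {W : ℝ → Ω → ℝ} (hW : IsBrownianMotion W)
    {T : ℝ} (hT : 0 < T) {τ : ℝ → ℝ}
    (hτmono : MonotoneOn τ (Set.Icc 0 T))
    (hτid : ∀ u ∈ Set.Ico (0 : ℝ) T, u < τ u) (hτT : τ T = T)
    (hτmaps : ∀ u ∈ Set.Icc (0 : ℝ) T, τ u ∈ Set.Icc (0 : ℝ) T)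
    (s : ℝ) {η c : ℝ} (hηpos : 0 < η) (hcpos : 0 < c)
    (hc : ∀ u ∈ Set.Icc (0:ℝ) (T - η), c ≤ τ u - u)
    (n : ℕ) (t : Fin (n + 1) → ℝ)
    (hsm : StrictMono t) (ht0 : t 0 = 0) (htT : t (Fin.last n) = T)
    (hmesh : ∀ i : Fin n, t i.succ - t i.castSucc < min c η) :
    (∫ ω, (∑ i : Fin n, if t i.castSucc ≤ s then
        (W (t i.succ) ω - W (t i.castSucc) ω) *
          (W (τ (t i.succ)) ω - W (τ (t i.castSucc)) ω) else 0) ^ 2 ∂ℙ)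
      ≤ 3 * (η * T) + 6 * (T * (η + min c η)) := by
  classical
  set δ := min c η with hδdef
  have hδpos : 0 < δ := lt_min hcpos hηpos
  have hδη : δ ≤ η := min_le_right _ _
  have hδc : δ ≤ c := min_le_left _ _
  set X : Fin n → Ω → ℝ := fun i ω => W (t i.succ) ω - W (t i.castSucc) ω with hXdef
  set Y : Fin n → Ω → ℝ := fun i ω => W (τ (t i.succ)) ω - W (τ (t i.castSucc)) ω with hYdef
  set Z : Fin n → Ω → ℝ := fun i ω => if t i.castSucc ≤ s then X i ω * Y i ω else 0 with hZdef
  set V : Fin n → Ω → ℝ :=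
    fun i ω => W (τ (t i.succ)) ω - W (max (t i.succ) (τ (t i.castSucc))) ω with hVdef
  set U : Fin n → Ω → ℝ :=
    fun i ω => W (max (t i.succ) (τ (t i.castSucc))) ω - W (τ (t i.castSucc)) ω with hUdef
  set l : Fin n → ℝ := fun i => t i.succ - t i.castSucc with hldef
  set L : Fin n → ℝ := fun i => τ (t i.succ) - τ (t i.castSucc) with hLdef
  set ee : Fin n → ℝ := fun i => max (t i.succ - τ (t i.castSucc)) 0 with heedef
  -- basic facts
  have hmem : ∀ j : Fin (n+1), t j ∈ Set.Icc (0:ℝ) T := by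
    intro j
    constructor
    · rw [← ht0]; exact hsm.monotone (Fin.zero_le j)
    · rw [← htT]; exact hsm.monotone (Fin.le_last j)
  have hτle : ∀ u ∈ Set.Icc (0:ℝ) T, u ≤ τ u := by
    intro u hu
    rcases eq_or_lt_of_le hu.2 with h | h
    · rw [h, hτT]
    · exact (hτid u ⟨hu.1, h⟩).le
  have hab : ∀ i : Fin n, t i.castSucc < t i.succ := fun i => hsm (Fin.castSucc_lt_succ (i := i))
  have ha0 : ∀ i : Fin n, 0 ≤ t i.castSucc := fun i => (hmem _).1
  have haA : ∀ i : Fin n, t i.castSucc ≤ τ (t i.castSucc) := fun i => hτle _ (hmem _)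
  have hbB : ∀ i : Fin n, t i.succ ≤ τ (t i.succ) := fun i => hτle _ (hmem _)
  have hAB : ∀ i : Fin n, τ (t i.castSucc) ≤ τ (t i.succ) :=
    fun i => hτmono (hmem _) (hmem _) (hab i).le
  have hA0 : ∀ i : Fin n, 0 ≤ τ (t i.castSucc) := fun i => (hτmaps _ (hmem _)).1
  have hl0 : ∀ i, 0 ≤ l i := fun i => (sub_nonneg.2 (hab i).le)
  have hlδ : ∀ i, l i < δ := hmesh
  have hL0 : ∀ i, 0 ≤ L i := fun i => sub_nonneg.2 (hAB i)
  have hee0 : ∀ i, 0 ≤ ee i := fun i => le_max_right _ _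
  have hee_le : ∀ i, ee i ≤ l i := by
    intro i
    apply max_le
    · have := haA i
      simp only [hldef]
      linarith
    · exact hl0 i
  have hM0 : ∀ i : Fin n, 0 ≤ max (t i.succ) (τ (t i.castSucc)) :=
    fun i => le_trans (hA0 i) (le_max_right _ _)
  have hMB : ∀ i : Fin n, max (t i.succ) (τ (t i.castSucc)) ≤ τ (t i.succ) :=
    fun i => max_le (hbB i) (hAB i)
  have hAM : ∀ i : Fin n, τ (t i.castSucc) ≤ max (t i.succ) (τ (t i.castSucc)) :=
    fun i => le_max_right _ _
  have hMe : ∀ i : Fin n, max (t i.succ) (τ (t i.castSucc)) - τ (t i.castSucc) = ee i := by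
    intro i
    rw [← max_sub_sub_right, sub_self]
  -- measurability and integrability
  have hXm : ∀ i, Measurable (X i) := fun i => (hW.1 _).sub (hW.1 _)
  have hYm : ∀ i, Measurable (Y i) := fun i => (hW.1 _).sub (hW.1 _)
  have hUm : ∀ i, Measurable (U i) := fun i => (hW.1 _).sub (hW.1 _)
  have hX4i : ∀ i, Integrable (fun ω => X i ω ^ 4) ℙ :=
    fun i => my_incr_pow_int hW (ha0 i) (hab i).le 4
  have hY4i : ∀ i, Integrable (fun ω => Y i ω ^ 4) ℙ :=
    fun i => my_incr_pow_int hW (hA0 i) (hAB i) 4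
  have hU4i : ∀ i, Integrable (fun ω => U i ω ^ 4) ℙ :=
    fun i => my_incr_pow_int hW (hA0 i) (hAM i) 4
  have hX4 : ∀ i, ∫ ω, X i ω ^ 4 ∂ℙ = 3 * l i ^ 2 :=
    fun i => my_incr_four hW (ha0 i) (hab i).le
  have hY4 : ∀ i, ∫ ω, Y i ω ^ 4 ∂ℙ = 3 * L i ^ 2 :=
    fun i => my_incr_four hW (hA0 i) (hAB i)
  have hU4 : ∀ i, ∫ ω, U i ω ^ 4 ∂ℙ = 3 * ee i ^ 2 := by
    intro i
    have h := my_incr_four hW (hA0 i) (hAM i)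
    rw [hMe i] at h
    exact h
  have hXYXY : ∀ i j, Integrable (fun ω => X i ω * Y i ω * X j ω * Y j ω) ℙ :=
    fun i j => my_int_mul4 (hXm i) (hYm i) (hXm j) (hYm j) (hX4i i) (hY4i i) (hX4i j) (hY4i j)
  have hZZsplit : ∀ i j, (fun ω => Z i ω * Z j ω)
      = fun ω => if t i.castSucc ≤ s ∧ t j.castSucc ≤ s
          then X i ω * Y i ω * X j ω * Y j ω else 0 := by
    intro i j
    funext ω
    simp only [hZdef]
    by_cases h1 : t i.castSucc ≤ s <;> by_cases h2 : t j.castSucc ≤ s <;>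
      simp [h1, h2] <;> ring
  have hZZi : ∀ i j, Integrable (fun ω => Z i ω * Z j ω) ℙ := by
    intro i j
    rw [hZZsplit i j]
    by_cases h : t i.castSucc ≤ s ∧ t j.castSucc ≤ s
    · simp only [if_pos h]
      exact hXYXY i j
    · simp only [if_neg h]
      exact integrable_const 0
  -- diagonal bound
  have diag : ∀ i, ∫ ω, Z i ω * Z i ω ∂ℙ ≤ 3 * (l i * L i) := by
    intro i
    have habs : Integrable (fun ω => |X i ω ^ 2 * Y i ω ^ 2|) ℙ :=
      ((my_int_mul4 (hXm i) (hXm i) (hYm i) (hYm i) (hX4i i) (hX4i i) (hY4i i)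
        (hY4i i)).congr (ae_of_all _ fun ω => by ring)).abs
    have h1 : ∀ ω, Z i ω * Z i ω ≤ |X i ω ^ 2 * Y i ω ^ 2| := by
      intro ω
      rw [abs_of_nonneg (mul_nonneg (sq_nonneg (X i ω)) (sq_nonneg (Y i ω)))]
      simp only [hZdef]
      by_cases h : t i.castSucc ≤ s
      · simp only [if_pos h]; nlinarith [sq_nonneg (X i ω * Y i ω)]
      · simp only [if_neg h, mul_zero, zero_mul]; positivity
    have h2 := integral_mono (hZZi i i) habs (fun ω => h1 ω)
    have h3 := my_cs (φ := fun ω => X i ω ^ 2) (ψ := fun ω => Y i ω ^ 2)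
      ((hXm i).pow_const 2).aestronglyMeasurable ((hYm i).pow_const 2).aestronglyMeasurable
      ((hX4i i).congr (ae_of_all _ fun ω => by ring))
      ((hY4i i).congr (ae_of_all _ fun ω => by ring))
    have h4 : ∫ ω, (X i ω ^ 2) ^ 2 ∂ℙ = 3 * l i ^ 2 := by
      rw [← hX4 i]; apply integral_congr_ae; filter_upwards with ω; ring
    have h5 : ∫ ω, (Y i ω ^ 2) ^ 2 ∂ℙ = 3 * L i ^ 2 := by
      rw [← hY4 i]; apply integral_congr_ae; filter_upwards with ω; ring
    rw [h4, h5] at h3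
    have h6 : Real.sqrt (3 * l i ^ 2 * (3 * L i ^ 2)) = 3 * (l i * L i) := by
      rw [show 3 * l i ^ 2 * (3 * L i ^ 2) = (3 * (l i * L i)) ^ 2 by ring]
      exact Real.sqrt_sq (by nlinarith [hl0 i, hL0 i, mul_nonneg (hl0 i) (hL0 i)])
    rw [h6] at h3
    exact le_trans h2 h3
  -- off-diagonal bound
  have off : ∀ i j, i < j → |∫ ω, Z i ω * Z j ω ∂ℙ|
      ≤ 3 * (Real.sqrt (l i * L i) * Real.sqrt (l j * ee j)) := by
    intro i j hij
    have hbnd0 : 0 ≤ 3 * (Real.sqrt (l i * L i) * Real.sqrt (l j * ee j)) := by positivity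
    rw [hZZsplit i j]
    by_cases hcond : t i.castSucc ≤ s ∧ t j.castSucc ≤ s
    · simp only [if_pos hcond]
      have hdec : (fun ω => X i ω * Y i ω * X j ω * Y j ω)
          = fun ω => X i ω * Y i ω * X j ω * V j ω + X i ω * Y i ω * X j ω * U j ω := by
        funext ω
        simp only [hXdef, hYdef, hVdef, hUdef]
        ring
      have intV : Integrable (fun ω => X i ω * Y i ω * X j ω * V j ω) ℙ :=
        my_int_mul4 (hXm i) (hYm i) (hXm j) ((hW.1 _).sub (hW.1 _)) (hX4i i) (hY4i i) (hX4i j)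
          (my_incr_pow_int hW (hM0 j) (hMB j) 4)
      have intU : Integrable (fun ω => X i ω * Y i ω * X j ω * U j ω) ℙ :=
        my_int_mul4 (hXm i) (hYm i) (hXm j) (hUm j) (hX4i i) (hY4i i) (hX4i j) (hU4i j)
      rw [hdec, integral_add intV intU]
      have hbiaj : t i.succ ≤ t j.castSucc := hsm.monotone (Fin.succ_le_castSucc_iff.2 hij)
      have hzero : ∫ ω, X i ω * Y i ω * X j ω * V j ω ∂ℙ = 0 := by
        have hindep := my_indep_prod3 hW (c := max (t j.succ) (τ (t j.castSucc)))
          (d := τ (t j.succ)) (hM0 j) (hMB j)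
          (a1 := t i.castSucc) (b1 := t i.succ)
          (a2 := τ (t i.castSucc)) (b2 := τ (t i.succ))
          (a3 := t j.castSucc) (b3 := t j.succ)
          ⟨ha0 i, by
            have := le_max_left (t j.succ) (τ (t j.castSucc))
            have h7 := hab j
            linarith [hab i]⟩
          ⟨le_trans (ha0 i) (hab i).le, by
            have := le_max_left (t j.succ) (τ (t j.castSucc))
            have h7 := hab j
            linarith⟩
          ⟨hA0 i, by
            have h8 : τ (t i.castSucc) ≤ τ (t j.castSucc) :=
              hτmono (hmem _) (hmem _) (le_trans (hab i).le hbiaj)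
            have := le_max_right (t j.succ) (τ (t j.castSucc))
            linarith⟩
          ⟨le_trans (hA0 i) (hAB i), by
            have h8 : τ (t i.succ) ≤ τ (t j.castSucc) := hτmono (hmem _) (hmem _) hbiaj
            have := le_max_right (t j.succ) (τ (t j.castSucc))
            linarith⟩
          ⟨ha0 j, by
            have := le_max_left (t j.succ) (τ (t j.castSucc))
            linarith [hab j]⟩
          ⟨le_trans (ha0 j) (hab j).le, le_max_left _ _⟩
        have hP3 : Integrable (fun ω => X i ω * Y i ω * X j ω) ℙ :=
          my_int_mul3 (hXm i) (hYm i) (hXm j) (hX4i i) (hY4i i) (hX4i j)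
        have hVint : Integrable (V j) ℙ := by
          have := my_incr_pow_int hW (hM0 j) (hMB j) 1
          simpa using this
        have hres := hindep.integral_mul_eq_mul_integral hP3.aestronglyMeasurable hVint.aestronglyMeasurable
        rw [my_incr_mean hW (hM0 j) (hMB j)] at hres
        rw [mul_zero] at hres
        have : (fun ω => X i ω * Y i ω * X j ω * V j ω)
            = (fun ω => X i ω * Y i ω * X j ω) * V j := by
          funext ω
          simp [Pi.mul_apply]
        rw [this]
        exact hres
      rw [hzero, zero_add]
      have habs := my_abs_int_mul4 (hXm i) (hYm i) (hXm j) (hUm j)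
        (hX4i i) (hY4i i) (hX4i j) (hU4i j)
      rw [hX4 i, hY4 i, hX4 j, hU4 j] at habs
      refine le_trans habs (le_of_eq ?_)
      rw [show 3 * l i ^ 2 * (3 * L i ^ 2) = (3 * (l i * L i)) ^ 2 by ring,
        Real.sqrt_sq (by nlinarith [mul_nonneg (hl0 i) (hL0 i)]),
        show 3 * l j ^ 2 * (3 * ee j ^ 2) = (3 * (l j * ee j)) ^ 2 by ring,
        Real.sqrt_sq (by nlinarith [mul_nonneg (hl0 j) (hee0 j)]),
        show 3 * (l i * L i) * (3 * (l j * ee j))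
          = (3 * (Real.sqrt (l i * L i) * Real.sqrt (l j * ee j))) ^ 2 by
            rw [mul_pow, mul_pow, Real.sq_sqrt (mul_nonneg (hl0 i) (hL0 i)),
              Real.sq_sqrt (mul_nonneg (hl0 j) (hee0 j))]
            ring,
        Real.sqrt_sq (by positivity)]
    · simp only [if_neg hcond, integral_zero, abs_zero]
      exact hbnd0
  -- sums
  have hsum_l : ∑ i : Fin n, l i = T := by
    have := my_fin_telescope n t
    simp only [hldef]
    rw [this, htT, ht0, sub_zero]
  have hsum_L : ∑ i : Fin n, L i ≤ T := by
    have := my_fin_telescope n (fun j => τ (t j))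
    simp only [hLdef]
    rw [this, htT, ht0, hτT]
    have := (hτmaps 0 ⟨le_refl _, hT.le⟩).1
    linarith
  have hP : ∑ i : Fin n, Real.sqrt (l i * L i) ≤ T := by
    have hper : ∀ i : Fin n, Real.sqrt (l i * L i) ≤ (l i + L i) / 2 := by
      intro i
      have hh : (0:ℝ) ≤ (l i + L i) / 2 :=
        div_nonneg (add_nonneg (hl0 i) (hL0 i)) (by norm_num)
      rw [show (l i + L i) / 2 = Real.sqrt (((l i + L i) / 2) ^ 2) from (Real.sqrt_sq hh).symm]
      apply Real.sqrt_le_sqrt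
      have key2 : ((l i + L i) / 2) ^ 2 - l i * L i = ((l i - L i) / 2) ^ 2 := by ring
      linarith [sq_nonneg ((l i - L i) / 2), key2]
    calc ∑ i : Fin n, Real.sqrt (l i * L i) ≤ ∑ i : Fin n, (l i + L i) / 2 :=
          Finset.sum_le_sum fun i _ => hper i
      _ = ((∑ i : Fin n, l i) + ∑ i : Fin n, L i) / 2 := by
          rw [← Finset.sum_add_distrib, ← Finset.sum_div]
      _ ≤ (T + T) / 2 := by
          have := hsum_L
          rw [hsum_l]
          linarith
      _ = T := by ring
  have hQ : ∑ j : Fin n, Real.sqrt (l j * ee j) ≤ η + δ := by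
    have hper : ∀ j : Fin n, Real.sqrt (l j * ee j)
        ≤ max (t j.succ) (T - η - δ) - max (t j.castSucc) (T - η - δ) := by
      intro j
      by_cases hgj : t j.succ ≤ T - η
      · have heez : ee j = 0 := by
          have hmem2 : t j.castSucc ∈ Set.Icc (0:ℝ) (T - η) :=
            ⟨ha0 j, le_trans (hab j).le hgj⟩
          have hc2 := hc _ hmem2
          have hl2 := hlδ j
          simp only [heedef]
          apply max_eq_right
          simp only [hldef] at hl2
          linarith
        rw [heez, mul_zero, Real.sqrt_zero]
        rw [sub_nonneg.symm] at *
        have : max (t j.castSucc) (T - η - δ) ≤ max (t j.succ) (T - η - δ) :=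
          max_le_max (hab j).le (le_refl _)
        linarith
      · push_neg at hgj
        have h1 : Real.sqrt (l j * ee j) ≤ l j := by
          calc Real.sqrt (l j * ee j) ≤ Real.sqrt (l j * l j) := by
                apply Real.sqrt_le_sqrt
                exact mul_le_mul_of_nonneg_left (hee_le j) (hl0 j)
            _ = l j := Real.sqrt_mul_self (hl0 j)
        have hφ1 : max (t j.succ) (T - η - δ) = t j.succ := by
          apply max_eq_left
          linarith [hδpos]
        have hφ2 : max (t j.castSucc) (T - η - δ) = t j.castSucc := by
          apply max_eq_left
          have := hlδ j
          simp only [hldef] at this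
          linarith
        rw [hφ1, hφ2]
        simpa only [hldef] using h1
    calc ∑ j : Fin n, Real.sqrt (l j * ee j)
        ≤ ∑ j : Fin n, (max (t j.succ) (T - η - δ) - max (t j.castSucc) (T - η - δ)) :=
          Finset.sum_le_sum fun j _ => hper j
      _ = max (t (Fin.last n)) (T - η - δ) - max (t 0) (T - η - δ) :=
          my_fin_telescope n (fun j => max (t j) (T - η - δ))
      _ ≤ η + δ := by
          rw [htT, ht0]
          have h1 : max T (T - η - δ) = T := max_eq_left (by linarith)
          have h2 : T - η - δ ≤ max 0 (T - η - δ) := le_max_right _ _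
          rw [h1]
          linarith
  have hQ0 : 0 ≤ ∑ j : Fin n, Real.sqrt (l j * ee j) :=
    Finset.sum_nonneg fun j _ => Real.sqrt_nonneg _
  have hD : ∑ i : Fin n, l i * L i ≤ η * T := by
    calc ∑ i : Fin n, l i * L i ≤ ∑ i : Fin n, η * L i := by
          apply Finset.sum_le_sum
          intro i _
          exact mul_le_mul_of_nonneg_right (le_trans (hlδ i).le hδη) (hL0 i)
      _ = η * ∑ i : Fin n, L i := by rw [Finset.mul_sum]
      _ ≤ η * T := mul_le_mul_of_nonneg_left hsum_L hηpos.le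
  -- expansion
  have hexp : (∫ ω, (∑ i : Fin n, Z i ω) ^ 2 ∂ℙ)
      = ∑ i : Fin n, ∑ j : Fin n, ∫ ω, Z i ω * Z j ω ∂ℙ := by
    have e : ∀ ω, (∑ i : Fin n, Z i ω) ^ 2 = ∑ i : Fin n, ∑ j : Fin n, Z i ω * Z j ω := by
      intro ω
      rw [sq, Finset.sum_mul_sum]
    rw [integral_congr_ae (ae_of_all _ e)]
    rw [integral_finset_sum _ (fun i _ => integrable_finset_sum _ (fun j _ => hZZi i j))]
    apply Finset.sum_congr rfl
    intro i _
    rw [integral_finset_sum _ (fun j _ => hZZi i j)]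
  have hgoal0 : (∫ ω, (∑ i : Fin n, if t i.castSucc ≤ s then
        (W (t i.succ) ω - W (t i.castSucc) ω) *
          (W (τ (t i.succ)) ω - W (τ (t i.castSucc)) ω) else 0) ^ 2 ∂ℙ)
      = ∫ ω, (∑ i : Fin n, Z i ω) ^ 2 ∂ℙ := rfl
  rw [hgoal0, hexp]
  -- per-pair bound
  have step2 : ∑ i : Fin n, ∑ j : Fin n, ∫ ω, Z i ω * Z j ω ∂ℙ
      ≤ ∑ i : Fin n, ∑ j : Fin n, ((if i = j then 3 * (l i * L i) else 0)
          + 3 * (Real.sqrt (l i * L i) * Real.sqrt (l j * ee j)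
            + Real.sqrt (l j * L j) * Real.sqrt (l i * ee i))) := by
    apply Finset.sum_le_sum
    intro i _
    apply Finset.sum_le_sum
    intro j _
    rcases lt_trichotomy i j with h | h | h
    · have hoff := off i j h
      rw [if_neg (ne_of_lt h)]
      have h2 : 0 ≤ Real.sqrt (l j * L j) * Real.sqrt (l i * ee i) :=
        mul_nonneg (Real.sqrt_nonneg _) (Real.sqrt_nonneg _)
      have h3 := le_trans (le_abs_self _) hoff
      linarith
    · subst h
      rw [if_pos rfl]
      have h2 : 0 ≤ Real.sqrt (l i * L i) * Real.sqrt (l i * ee i) :=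
        mul_nonneg (Real.sqrt_nonneg _) (Real.sqrt_nonneg _)
      have := diag i
      linarith
    · have hoff := off j i h
      have hcomm : ∫ ω, Z i ω * Z j ω ∂ℙ = ∫ ω, Z j ω * Z i ω ∂ℙ := by
        apply integral_congr_ae
        filter_upwards with ω
        ring
      rw [if_neg (ne_of_gt h), hcomm]
      have h2 : 0 ≤ Real.sqrt (l i * L i) * Real.sqrt (l j * ee j) :=
        mul_nonneg (Real.sqrt_nonneg _) (Real.sqrt_nonneg _)
      have h3 := le_trans (le_abs_self _) hoff
      linarith
  refine le_trans step2 ?_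
  -- sum algebra
  have split1 : ∑ i : Fin n, ∑ j : Fin n, ((if i = j then 3 * (l i * L i) else 0)
          + 3 * (Real.sqrt (l i * L i) * Real.sqrt (l j * ee j)
            + Real.sqrt (l j * L j) * Real.sqrt (l i * ee i)))
      = (∑ i : Fin n, ∑ j : Fin n, (if i = j then 3 * (l i * L i) else 0))
        + ∑ i : Fin n, ∑ j : Fin n, 3 * (Real.sqrt (l i * L i) * Real.sqrt (l j * ee j)
            + Real.sqrt (l j * L j) * Real.sqrt (l i * ee i)) := by
    rw [← Finset.sum_add_distrib]
    apply Finset.sum_congr rfl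
    intro i _
    rw [Finset.sum_add_distrib]
  have hAsum : (∑ i : Fin n, ∑ j : Fin n, (if i = j then 3 * (l i * L i) else 0))
      = 3 * ∑ i : Fin n, l i * L i := by
    rw [Finset.mul_sum]
    apply Finset.sum_congr rfl
    intro i _
    rw [Finset.sum_ite_eq]
    simp
  have e3a : ∑ i : Fin n, ∑ j : Fin n, Real.sqrt (l i * L i) * Real.sqrt (l j * ee j)
      = (∑ i : Fin n, Real.sqrt (l i * L i)) * (∑ j : Fin n, Real.sqrt (l j * ee j)) :=
    (Finset.sum_mul_sum _ _ _ _).symm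
  have e3b : ∑ i : Fin n, ∑ j : Fin n, Real.sqrt (l j * L j) * Real.sqrt (l i * ee i)
      = (∑ j : Fin n, Real.sqrt (l j * L j)) * (∑ i : Fin n, Real.sqrt (l i * ee i)) := by
    rw [Finset.sum_comm]
    exact (Finset.sum_mul_sum _ _ _ _).symm
  have hBeq : ∑ i : Fin n, ∑ j : Fin n, 3 * (Real.sqrt (l i * L i) * Real.sqrt (l j * ee j)
            + Real.sqrt (l j * L j) * Real.sqrt (l i * ee i))
      = 3 * ((∑ i : Fin n, ∑ j : Fin n, Real.sqrt (l i * L i) * Real.sqrt (l j * ee j))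
          + ∑ i : Fin n, ∑ j : Fin n, Real.sqrt (l j * L j) * Real.sqrt (l i * ee i)) := by
    calc ∑ i : Fin n, ∑ j : Fin n, 3 * (Real.sqrt (l i * L i) * Real.sqrt (l j * ee j)
            + Real.sqrt (l j * L j) * Real.sqrt (l i * ee i))
        = ∑ i : Fin n, 3 * ∑ j : Fin n, (Real.sqrt (l i * L i) * Real.sqrt (l j * ee j)
            + Real.sqrt (l j * L j) * Real.sqrt (l i * ee i)) := by
          apply Finset.sum_congr rfl
          intro i _
          rw [Finset.mul_sum]
      _ = 3 * ∑ i : Fin n, ∑ j : Fin n, (Real.sqrt (l i * L i) * Real.sqrt (l j * ee j)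
            + Real.sqrt (l j * L j) * Real.sqrt (l i * ee i)) := by
          rw [Finset.mul_sum]
      _ = 3 * ∑ i : Fin n, ((∑ j : Fin n, Real.sqrt (l i * L i) * Real.sqrt (l j * ee j))
            + ∑ j : Fin n, Real.sqrt (l j * L j) * Real.sqrt (l i * ee i)) := by
          congr 1
          apply Finset.sum_congr rfl
          intro i _
          rw [Finset.sum_add_distrib]
      _ = 3 * ((∑ i : Fin n, ∑ j : Fin n, Real.sqrt (l i * L i) * Real.sqrt (l j * ee j))
          + ∑ i : Fin n, ∑ j : Fin n, Real.sqrt (l j * L j) * Real.sqrt (l i * ee i)) := by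
          rw [Finset.sum_add_distrib]
  rw [split1, hAsum, hBeq, e3a, e3b]
  have hPQ : (∑ i : Fin n, Real.sqrt (l i * L i)) * (∑ j : Fin n, Real.sqrt (l j * ee j))
      ≤ T * (η + δ) := mul_le_mul hP hQ hQ0 hT.le
  have h3D : 3 * ∑ i : Fin n, l i * L i ≤ 3 * (η * T) := by linarith [hD]
  linarith [hPQ, h3D]


/-- The cross quadratic-variation sums of a Brownian motion `W` and its anticipative
time change `W∘τ` vanish in `L²` as the partition mesh tends to `0`: for every
`s ∈ [0,T]`, `E[(Σ_{[u,v]∈P, u≤s} (W(v)−W(u))(W(τ(v))−W(τ(u))))²] → 0` as `|P| → 0`. -/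
theorem brownian_cross_quadratic_variation_L2_zero
    {Ω : Type*} [MeasureSpace Ω] [IsProbabilityMeasure (ℙ : Measure Ω)]
    (W : ℝ → Ω → ℝ) (hW : IsBrownianMotion W)
    (T : ℝ) (hT : 0 < T)
    (τ : ℝ → ℝ) (hτc : ContinuousOn τ (Set.Icc 0 T))
    (hτmono : MonotoneOn τ (Set.Icc 0 T))
    (hτid : ∀ t ∈ Set.Ico (0 : ℝ) T, t < τ t) (hτT : τ T = T)
    (hτmaps : ∀ t ∈ Set.Icc (0 : ℝ) T, τ t ∈ Set.Icc (0 : ℝ) T)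
    (s : ℝ) (hs : s ∈ Set.Icc (0 : ℝ) T) :
    ∀ ε > (0 : ℝ), ∃ δ > (0 : ℝ),
      ∀ (n : ℕ) (t : Fin (n + 1) → ℝ),
        StrictMono t → t 0 = 0 → t (Fin.last n) = T →
        (∀ i : Fin n, t i.succ - t i.castSucc < δ) →
        (∫ ω, (∑ i : Fin n,
            if t i.castSucc ≤ s then
              (W (t i.succ) ω - W (t i.castSucc) ω) *
                (W (τ (t i.succ)) ω - W (τ (t i.castSucc)) ω)
            else 0) ^ 2 ∂ℙ) < ε := by
  intro ε hε
  set η := ε / (15 * T + 1) with hηdef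
  have hηpos : 0 < η := div_pos hε (by linarith)
  obtain ⟨c, hcpos, hc⟩ : ∃ c > 0, ∀ u ∈ Set.Icc (0:ℝ) (T - η), c ≤ τ u - u := by
    by_cases hTη : T - η < 0
    · exact ⟨1, one_pos, fun u hu => absurd (hu.1.trans hu.2) (not_le.2 hTη)⟩
    · push_neg at hTη
      have hsub : Set.Icc (0:ℝ) (T - η) ⊆ Set.Icc 0 T :=
        Set.Icc_subset_Icc le_rfl (by linarith)
      have hcont : ContinuousOn (fun u => τ u - u) (Set.Icc 0 (T - η)) :=
        (hτc.mono hsub).sub continuousOn_id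
      obtain ⟨u0, hu0mem, hu0min⟩ := isCompact_Icc.exists_isMinOn (Set.nonempty_Icc.2 hTη) hcont
      refine ⟨τ u0 - u0, ?_, fun u hu => hu0min hu⟩
      have hu0 : u0 ∈ Set.Ico (0:ℝ) T := ⟨hu0mem.1, by have := hu0mem.2; linarith⟩
      linarith [hτid u0 hu0]
  refine ⟨min c η, lt_min hcpos hηpos, ?_⟩
  intro n t hsm ht0 htT hmesh
  have hb := my_main_bound hW hT hτmono hτid hτT hτmaps s hηpos hcpos hc n t hsm ht0 htT hmesh
  have hδη : min c η ≤ η := min_le_right _ _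
  refine lt_of_le_of_lt (le_trans hb ?_) (show 15 * (T * η) < ε from ?_)
  · have h6 : T * min c η ≤ T * η := mul_le_mul_of_nonneg_left hδη hT.le
    nlinarith [hT.le, hηpos.le]
  · have hd : (0:ℝ) < 15 * T + 1 := by linarith
    have he : 15 * (T * η) = 15 * T * ε / (15 * T + 1) := by
      rw [hηdef]; ring
    rw [he, div_lt_iff₀ hd]
    nlinarith [hε]
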